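/- Let y₀ be the unique real number in (1/√2, 1) satisfying (1 − y₀)e^{4y₀} = 1 + y₀. Define F(x₁, x₂, y) := (x₁ − 1/2)² + (x₁ + x₂)(1 + y) − (1 − y)e^{4y} + (y − y₀)³ and f(x₁, x₂, y) := −(x₁ + x₂)e^{−(y+1)²} − e^{−(y−1)²}. Then the point (x̄₁, x̄₂, ȳ) = (1/2, 1/2, y₀) is feasible for the bilevel program, i.e., y₀ ∈ argmin_{y' ∈ R} f(1/2, 1/2, y'), F(1/2, 1/2, y₀) = 0, and (1/2, 1/2, y₀) is a local minimizer of F over the bilevel feasible set {(x₁, x₂, y) ∈ R³ : y ∈ argmin_{y' ∈ R} f(x₁, x₂, y')}: there exists ε > 0 such that F(x₁, x₂, y) ≥ 0 for every (x₁, x₂, y) in this feasible set with ‖(x₁, x₂, y) − (1/2, 1/2, y₀)‖ < ε. -/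

import Mathlib

open Set

noncomputable section

/-- The upper-level objective of the modified Mirrlees example. -/
def Fup (y₀ x₁ x₂ y : ℝ) : ℝ :=
  (x₁ - 1/2)^2 + (x₁ + x₂) * (1 + y) - (1 - y) * Real.exp (4*y) + (y - y₀)^3

/-- The lower-level objective of the modified Mirrlees example. -/
def flow (x₁ x₂ y : ℝ) : ℝ :=
  -(x₁ + x₂) * Real.exp (-(y+1)^2) - Real.exp (-(y-1)^2)

/-- Auxiliary function `q`. -/
def qq (y : ℝ) : ℝ := (1 - y) * Real.exp (4*y) - (1 + y)

/-- Derivative of `qq`. -/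
def qq1 (y : ℝ) : ℝ := (3 - 4*y) * Real.exp (4*y) - 1

lemma hasDerivAt_qq (y : ℝ) : HasDerivAt qq (qq1 y) y := by
  have h1 : HasDerivAt (fun y : ℝ => Real.exp (4*y)) (Real.exp (4*y) * 4) y := by
    simpa using ((hasDerivAt_id y).const_mul 4).exp
  have h2 : HasDerivAt (fun y : ℝ => (1 - y)) (-1) y := by
    simpa using (hasDerivAt_id y).const_sub 1
  have h3 : HasDerivAt (fun y : ℝ => (1 + y)) 1 y := by
    simpa using (hasDerivAt_id y).const_add 1
  have := (h2.mul h1).sub h3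
  refine this.congr_deriv ?_
  simp [qq1]; ring

lemma hasDerivAt_qq1 (y : ℝ) :
    HasDerivAt qq1 ((8 - 16*y) * Real.exp (4*y)) y := by
  have h1 : HasDerivAt (fun y : ℝ => Real.exp (4*y)) (Real.exp (4*y) * 4) y := by
    simpa using ((hasDerivAt_id y).const_mul 4).exp
  have h2 : HasDerivAt (fun y : ℝ => (3 - 4*y)) (-4) y := by
    simpa using ((hasDerivAt_id y).const_mul 4).const_sub 3
  have := (h2.mul h1).sub_const 1
  refine this.congr_deriv ?_
  ring

lemma qq_zero : qq 0 = 0 := by simp [qq]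

lemma qq_half_pos : 0 < qq (1/2) := by
  have h : (2:ℝ) + 1 < Real.exp 2 := Real.add_one_lt_exp (by norm_num)
  have : (4 : ℝ) * (1/2) = 2 := by norm_num
  rw [qq, this]
  nlinarith

lemma qq1_anti : StrictAntiOn qq1 (Ici (1/2 : ℝ)) := by
  apply strictAntiOn_of_deriv_neg (convex_Ici _)
    (fun y _ => (hasDerivAt_qq1 y).continuousAt.continuousWithinAt)
  intro y hy
  rw [interior_Ici] at hy
  rw [(hasDerivAt_qq1 y).deriv]
  have := Real.exp_pos (4*y)
  have : (1:ℝ)/2 < y := hy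
  nlinarith [Real.exp_pos (4*y)]

lemma qq_mono : StrictMonoOn qq (Icc (0:ℝ) (1/2)) := by
  apply strictMonoOn_of_deriv_pos (convex_Icc _ _)
    (fun y _ => (hasDerivAt_qq y).continuousAt.continuousWithinAt)
  intro y hy
  rw [interior_Icc] at hy
  rw [(hasDerivAt_qq y).deriv]
  have h1 : (4:ℝ)*y + 1 < Real.exp (4*y) := by
    have := Real.add_one_lt_exp (x := 4*y) (by nlinarith [hy.1])
    linarith
  rw [qq1]
  nlinarith [hy.1, hy.2]

lemma qq_cont : ContinuousOn qq (univ : Set ℝ) :=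
  fun y _ => (hasDerivAt_qq y).continuousAt.continuousWithinAt

lemma qq_diff : ∀ s : Set ℝ, DifferentiableOn ℝ qq s :=
  fun _ y _ => (hasDerivAt_qq y).differentiableAt.differentiableWithinAt

section Key

variable {y₀ : ℝ} (hhalf : 1/2 < y₀) (hq0 : qq y₀ = 0)

include hhalf hq0 in
/-- `qq` is positive on `(0, y₀)`. -/
lemma qq_pos_of_lt : ∀ a : ℝ, 0 < a → a < y₀ → 0 < qq a := by
  intro a ha hay
  by_contra h
  push_neg at h
  rcases le_or_gt a (1/2) with hle | hgt
  · have := qq_mono (left_mem_Icc.2 (by norm_num)) ⟨ha.le, hle⟩ ha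
    rw [qq_zero] at this
    linarith
  · -- a ∈ (1/2, y₀), q(1/2) > 0 ≥ q a, q y₀ = 0
    obtain ⟨c1, hc1, hc1'⟩ := exists_deriv_eq_slope qq hgt
      (qq_cont.mono (subset_univ _)) (qq_diff _)
    obtain ⟨c2, hc2, hc2'⟩ := exists_deriv_eq_slope qq hay
      (qq_cont.mono (subset_univ _)) (qq_diff _)
    rw [(hasDerivAt_qq c1).deriv] at hc1'
    rw [(hasDerivAt_qq c2).deriv] at hc2'
    have h1 : qq1 c1 < 0 := by
      rw [hc1']
      apply div_neg_of_neg_of_pos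
      · linarith [qq_half_pos]
      · linarith [hc1.1, hc1.2]
    have h2 : 0 ≤ qq1 c2 := by
      rw [hc2', hq0]
      apply div_nonneg (by linarith) (by linarith [hc2.1, hc2.2])
    have := qq1_anti (mem_Ici.2 hc1.1.le) (mem_Ici.2 (by linarith [hc1.2, hc2.1] : (1:ℝ)/2 ≤ c2))
      (lt_trans hc1.2 hc2.1)
    linarith

include hhalf hq0 in
/-- `qq` is nonpositive on `[y₀, ∞)`. -/
lemma qq_nonpos_of_ge : ∀ b : ℝ, y₀ ≤ b → qq b ≤ 0 := by
  intro b hb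
  rcases eq_or_lt_of_le hb with rfl | hb'
  · exact hq0.le
  by_contra h
  push_neg at h
  obtain ⟨c0, hc0, hc0'⟩ := exists_deriv_eq_slope qq hhalf
    (qq_cont.mono (subset_univ _)) (qq_diff _)
  obtain ⟨c1, hc1, hc1'⟩ := exists_deriv_eq_slope qq hb'
    (qq_cont.mono (subset_univ _)) (qq_diff _)
  rw [(hasDerivAt_qq c0).deriv] at hc0'
  rw [(hasDerivAt_qq c1).deriv] at hc1'
  have h0 : qq1 c0 < 0 := by
    rw [hc0', hq0]
    apply div_neg_of_neg_of_pos
    · linarith [qq_half_pos]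
    · linarith
  have h1 : 0 < qq1 c1 := by
    rw [hc1', hq0]
    apply div_pos (by linarith) (by linarith [hc1.1, hc1.2])
  have := qq1_anti (mem_Ici.2 hc0.1.le)
    (mem_Ici.2 (by linarith [hc0.2, hc1.1] : (1:ℝ)/2 ≤ c1))
    (lt_trans hc0.2 hc1.1)
  linarith

end Key

/-- exp identity. -/
lemma exp_shift (y : ℝ) :
    Real.exp (-(y-1)^2) = Real.exp (4*y) * Real.exp (-(y+1)^2) := by
  rw [← Real.exp_add]
  congr 1
  ring

/-- the symmetric Gaussian sum. -/
def gg (y : ℝ) : ℝ := Real.exp (-(y+1)^2) + Real.exp (-(y-1)^2)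

lemma gg_even (y : ℝ) : gg (-y) = gg y := by
  have h1 : (-y+1)^2 = (y-1)^2 := by ring
  have h2 : (-y-1)^2 = (y+1)^2 := by ring
  rw [gg, gg, h1, h2, add_comm]

lemma hasDerivAt_gg (y : ℝ) :
    HasDerivAt gg (2 * Real.exp (-(y+1)^2) * qq y) y := by
  have h1 : HasDerivAt (fun y : ℝ => -(y+1)^2) (-(2*(y+1))) y := by
    have := (((hasDerivAt_id y).add_const 1).pow 2).neg
    refine this.congr_deriv ?_
    simp
  have h2 : HasDerivAt (fun y : ℝ => -(y-1)^2) (-(2*(y-1))) y := by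
    have := (((hasDerivAt_id y).sub_const 1).pow 2).neg
    refine this.congr_deriv ?_
    simp
  have := (h1.exp).add (h2.exp)
  refine this.congr_deriv ?_
  rw [qq, exp_shift y]
  ring

section GG

variable {y₀ : ℝ} (hhalf : 1/2 < y₀) (hq0 : qq y₀ = 0)

include hhalf hq0 in
lemma gg_le_nonneg : ∀ y : ℝ, 0 ≤ y → gg y ≤ gg y₀ := by
  have hmono : MonotoneOn gg (Icc 0 y₀) := by
    apply monotoneOn_of_deriv_nonneg (convex_Icc _ _)
      (fun y _ => (hasDerivAt_gg y).continuousAt.continuousWithinAt)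
      (fun y _ => (hasDerivAt_gg y).differentiableAt.differentiableWithinAt)
    intro y hy
    rw [interior_Icc] at hy
    rw [(hasDerivAt_gg y).deriv]
    have := qq_pos_of_lt hhalf hq0 y hy.1 hy.2
    positivity
  have hanti : AntitoneOn gg (Ici y₀) := by
    apply antitoneOn_of_deriv_nonpos (convex_Ici _)
      (fun y _ => (hasDerivAt_gg y).continuousAt.continuousWithinAt)
      (fun y _ => (hasDerivAt_gg y).differentiableAt.differentiableWithinAt)
    intro y hy
    rw [interior_Ici] at hy
    rw [(hasDerivAt_gg y).deriv]
    have hq := qq_nonpos_of_ge hhalf hq0 y (le_of_lt hy)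
    have := Real.exp_pos (-(y+1)^2)
    nlinarith
  intro y hy
  rcases le_or_gt y y₀ with h | h
  · exact hmono ⟨hy, h⟩ (right_mem_Icc.2 (by linarith)) h
  · exact hanti (self_mem_Ici) (mem_Ici.2 h.le) h.le

include hhalf hq0 in
lemma gg_le : ∀ y : ℝ, gg y ≤ gg y₀ := by
  intro y
  rcases le_or_gt 0 y with h | h
  · exact gg_le_nonneg hhalf hq0 y h
  · rw [← gg_even y]
    exact gg_le_nonneg hhalf hq0 (-y) (by linarith)

end GG

lemma hasDerivAt_flow (x₁ x₂ y : ℝ) :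
    HasDerivAt (fun y' => flow x₁ x₂ y')
      (2*(x₁+x₂)*(y+1) * Real.exp (-(y+1)^2) + 2*(y-1) * Real.exp (-(y-1)^2)) y := by
  have h1 : HasDerivAt (fun y : ℝ => -(y+1)^2) (-(2*(y+1))) y := by
    have := (((hasDerivAt_id y).add_const 1).pow 2).neg
    refine this.congr_deriv ?_
    simp
  have h2 : HasDerivAt (fun y : ℝ => -(y-1)^2) (-(2*(y-1))) y := by
    have := (((hasDerivAt_id y).sub_const 1).pow 2).neg
    refine this.congr_deriv ?_
    simp
  have := ((h1.exp).const_mul (-(x₁+x₂))).sub (h2.exp)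
  unfold flow
  refine this.congr_deriv ?_
  ring

lemma half_lt : (1:ℝ)/2 < 1 / Real.sqrt 2 := by
  rw [div_lt_div_iff₀ (by norm_num) (Real.sqrt_pos.2 (by norm_num))]
  nlinarith [Real.sq_sqrt (by norm_num : (2:ℝ) ≥ 0), Real.sqrt_pos.2 (by norm_num : (0:ℝ) < 2)]

/-- `(1/2, 1/2, y₀)` is bilevel feasible and a local minimizer of the
modified Mirrlees bilevel program. -/
theorem stmt18 (y₀ : ℝ) (hy₀ : y₀ ∈ Ioo (1 / Real.sqrt 2) 1)
    (heq : (1 - y₀) * Real.exp (4*y₀) = 1 + y₀)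
    (huniq : ∀ y ∈ Ioo (1 / Real.sqrt 2) 1,
      (1 - y) * Real.exp (4*y) = 1 + y → y = y₀) :
    (∀ y' : ℝ, flow (1/2) (1/2) y₀ ≤ flow (1/2) (1/2) y') ∧
    Fup y₀ (1/2) (1/2) y₀ = 0 ∧
    ∃ ε > 0, ∀ x₁ x₂ y : ℝ, (∀ y' : ℝ, flow x₁ x₂ y ≤ flow x₁ x₂ y') →
      Real.sqrt ((x₁ - 1/2)^2 + (x₂ - 1/2)^2 + (y - y₀)^2) < ε →
      0 ≤ Fup y₀ x₁ x₂ y := by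
  have hhalf : (1:ℝ)/2 < y₀ := lt_trans half_lt hy₀.1
  have hq0 : qq y₀ = 0 := by rw [qq]; linarith
  have hy₀pos : 0 < y₀ := by linarith
  refine ⟨?_, ?_, ?_⟩
  · -- feasibility of lower level
    intro y'
    have h := gg_le hhalf hq0 y'
    have e : ∀ z : ℝ, flow (1/2) (1/2) z = -(gg z) := by
      intro z; rw [flow, gg]; ring
    rw [e, e]
    linarith
  · rw [Fup]
    linear_combination -heq
  · refine ⟨y₀, hy₀pos, ?_⟩
    intro x₁ x₂ y hfeas hdist
    -- |y - y₀| < y₀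
    have hyd : |y - y₀| < y₀ := by
      have h1 : (y - y₀)^2 ≤ (x₁ - 1/2)^2 + (x₂ - 1/2)^2 + (y - y₀)^2 := by nlinarith [sq_nonneg (x₁-1/2), sq_nonneg (x₂-1/2)]
      calc |y - y₀| = Real.sqrt ((y - y₀)^2) := (Real.sqrt_sq_eq_abs _).symm
        _ ≤ Real.sqrt ((x₁ - 1/2)^2 + (x₂ - 1/2)^2 + (y - y₀)^2) := Real.sqrt_le_sqrt h1
        _ < y₀ := hdist
    have hypos : 0 < y := by
      have := abs_lt.1 hyd
      linarith [this.1]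
    set A := Real.exp (-(y+1)^2) with hA
    set B := Real.exp (-(y-1)^2) with hB
    have hApos : 0 < A := Real.exp_pos _
    have hBpos : 0 < B := Real.exp_pos _
    have hAB : A < B := by
      rw [hA, hB]
      apply Real.exp_lt_exp.2
      nlinarith
    -- s ≤ 1 from symmetry comparison
    have hs1 : x₁ + x₂ ≤ 1 := by
      have h := hfeas (-y)
      rw [flow, flow] at h
      have e1 : (-y+1)^2 = (y-1)^2 := by ring
      have e2 : (-y-1)^2 = (y+1)^2 := by ring
      rw [e1, e2, ← hA, ← hB] at h
      nlinarith
    -- stationarity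
    have hcrit : (x₁ + x₂) * (1 + y) = (1 - y) * Real.exp (4*y) := by
      have hmin : IsLocalMin (fun y' => flow x₁ x₂ y') y :=
        Filter.Eventually.of_forall hfeas
      have hd := hmin.hasDerivAt_eq_zero (hasDerivAt_flow x₁ x₂ y)
      rw [exp_shift y] at hd
      have hd' : (2*(x₁+x₂)*(y+1) + 2*(y-1) * Real.exp (4*y)) * Real.exp (-(y+1)^2) = 0 := by
        linear_combination hd
      have h2 : 2*(x₁+x₂)*(y+1) + 2*(y-1) * Real.exp (4*y) = 0 := by
        rcases mul_eq_zero.1 hd' with h | h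
        · exact h
        · exact absurd h (ne_of_gt (Real.exp_pos _))
      linear_combination h2 / 2
    have hqy : qq y ≤ 0 := by
      rw [qq]
      nlinarith [mul_nonneg (by linarith : (0:ℝ) ≤ 1 - (x₁+x₂)) (by linarith : (0:ℝ) ≤ 1 + y)]
    have hyy₀ : y₀ ≤ y := by
      by_contra h
      push_neg at h
      have := qq_pos_of_lt hhalf hq0 y hypos h
      linarith
    rw [Fup]
    nlinarith [sq_nonneg (x₁ - 1/2), pow_nonneg (by linarith : (0:ℝ) ≤ y - y₀) 3, hcrit]
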